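/- Let τ̄ > 1 and c > 0. Define y_{k,n,m} = (n - m - k τ̄)/√k for positive integers k, n and integers m. Then there is a constant C (depending on c and τ̄) such that for all n ≥ 1, sup_{0 ≤ m ≤ √n} ∑_{k=1}^{n} (1/k) e^{-c y_{k,n,m}²} ≤ C/√n. -/

import Mathlib

set_option maxHeartbeats 4000000

open Finset

private lemma term_le_key (c : ℝ) (hc : 0 < c) {k : ℕ} (hk : 1 ≤ k) (x : ℝ) :
    (1 / (k : ℝ)) * Real.exp (-c * (x / Real.sqrt k) ^ 2) ≤ 1 / ((k : ℝ) + c * x ^ 2) := by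
  have hk0 : (0:ℝ) < k := by exact_mod_cast hk
  have hsq : (x / Real.sqrt k) ^ 2 = x ^ 2 / k := by
    rw [div_pow, Real.sq_sqrt hk0.le]
  have ht : 0 ≤ c * (x ^ 2 / k) := by positivity
  have h1 : Real.exp (-(c * (x^2/k))) ≤ (1 + c * (x^2/k))⁻¹ := by
    rw [Real.exp_neg]
    exact inv_anti₀ (by positivity) (by linarith [Real.add_one_le_exp (c * (x^2/k))])
  have h2 : -c * (x / Real.sqrt k) ^ 2 = -(c * (x^2/k)) := by rw [hsq]; ring
  rw [h2]
  calc (1/(k:ℝ)) * Real.exp (-(c * (x^2/k))) ≤ (1/(k:ℝ)) * (1 + c * (x^2/k))⁻¹ := by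
        apply mul_le_mul_of_nonneg_left h1 (by positivity)
    _ = 1 / ((k:ℝ) + c * x^2) := by
        rw [one_div, one_div, ← mul_inv]
        congr 1
        field_simp

private lemma half_sum_le (c' B : ℝ) (hc' : 0 < c') (hB : 0 ≤ B) (S N : ℕ) (g : ℕ → ℝ)
    (hg : ∀ s ∈ range N, g s ≤ if s ≤ S then B else 1 / (c' * (s:ℝ) ^ 2)) :
    ∑ s ∈ range N, g s ≤ ((S:ℝ) + 1) * B + 2 / (c' * ((S:ℝ) + 1)) := by
  calc ∑ s ∈ range N, g s
      ≤ ∑ s ∈ range N, (if s ≤ S then B else 1 / (c' * (s:ℝ)^2)) := sum_le_sum hg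
    _ = ∑ s ∈ (range N).filter (fun s => s ≤ S), B
        + ∑ s ∈ (range N).filter (fun s => ¬ s ≤ S), 1/(c' * (s:ℝ)^2) := sum_ite _ _
    _ ≤ ((S:ℝ)+1) * B + 2 / (c' * ((S:ℝ)+1)) := by
        gcongr ?_ + ?_
        · rw [sum_const, nsmul_eq_mul]
          apply mul_le_mul_of_nonneg_right _ hB
          have hsub : (range N).filter (fun s => s ≤ S) ⊆ range (S+1) := by
            intro s hs
            simp only [mem_filter, mem_range] at hs ⊢
            omega
          calc ((((range N).filter (fun s => s ≤ S)).card : ℝ))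
              ≤ ((range (S+1)).card : ℝ) := by exact_mod_cast card_le_card hsub
            _ = (S:ℝ) + 1 := by simp
        · have hsub : (range N).filter (fun s => ¬ s ≤ S) ⊆ Ioo S N := by
            intro s hs
            simp only [mem_filter, mem_range, mem_Ioo] at hs ⊢
            omega
          calc ∑ s ∈ (range N).filter (fun s => ¬ s ≤ S), 1/(c' * (s:ℝ)^2)
              ≤ ∑ s ∈ Ioo S N, 1/(c' * (s:ℝ)^2) := by
                apply sum_le_sum_of_subset_of_nonneg hsub
                intro i hi _
                positivity
            _ = (1/c') * ∑ s ∈ Ioo S N, ((s:ℝ)^2)⁻¹ := by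
                rw [mul_sum]
                apply sum_congr rfl
                intro s _
                rw [one_div, mul_inv, one_div, mul_comm]
            _ ≤ (1/c') * (2 / ((S:ℝ)+1)) := by
                apply mul_le_mul_of_nonneg_left (sum_Ioo_inv_sq_le _ _) (by positivity)
            _ = 2 / (c' * ((S:ℝ)+1)) := by
                field_simp

theorem sum_exp_y_sq_bound (τbar c : ℝ) (hτ : 1 < τbar) (hc : 0 < c) :
    ∃ C : ℝ, 0 < C ∧ ∀ n : ℕ, 1 ≤ n → ∀ m : ℕ, (m : ℝ) ≤ Real.sqrt n →
      ∑ k ∈ Finset.Icc 1 n,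
          (1 / (k : ℝ)) *
            Real.exp (-c * (((n : ℝ) - m - k * τbar) / Real.sqrt k) ^ 2)
        ≤ C / Real.sqrt n := by
  have hτ0 : 0 < τbar := by linarith
  set N₀ : ℕ := ⌈(64:ℝ) * τbar^2⌉₊ with hN₀def
  have hN₀ge : (64:ℝ) * τbar^2 ≤ N₀ := Nat.le_ceil _
  refine ⟨16*τbar + 4/(c*τbar^2) + (N₀:ℝ)^2, by positivity, ?_⟩
  intro n hn m hm
  have hn0 : (0:ℝ) < n := by exact_mod_cast hn
  have hrn0 : 0 < Real.sqrt n := Real.sqrt_pos.mpr hn0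
  have hrn2 : (Real.sqrt n)^2 = n := Real.sq_sqrt hn0.le
  have hrn1 : 1 ≤ Real.sqrt n := by
    rw [show (1:ℝ) = Real.sqrt 1 by simp]
    exact Real.sqrt_le_sqrt (by exact_mod_cast hn)
  set a : ℝ := (n:ℝ) - m with ha_def
  have ham : (n:ℝ) - Real.sqrt n ≤ a := by simp only [ha_def]; linarith
  have ha0 : 0 ≤ a := by nlinarith
  -- termwise bound
  have hterm : ∀ k ∈ Icc 1 n,
      (1 / (k : ℝ)) * Real.exp (-c * (((n : ℝ) - m - k * τbar) / Real.sqrt k) ^ 2)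
        ≤ 1 / ((k:ℝ) + c * (a - k * τbar)^2) := by
    intro k hk
    simp only [mem_Icc] at hk
    have := term_le_key c hc hk.1 (a - k * τbar)
    simpa only [ha_def, sub_sub] using this
  set F : ℕ → ℝ := fun k => 1 / ((k:ℝ) + c * (a - k * τbar)^2) with hF
  have hsum1 : ∑ k ∈ Icc 1 n,
      (1 / (k : ℝ)) * Real.exp (-c * (((n : ℝ) - m - k * τbar) / Real.sqrt k) ^ 2)
      ≤ ∑ k ∈ Icc 1 n, F k := sum_le_sum hterm
  by_cases hbig : N₀ ≤ n
  · -- large n case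
    have h64 : (64:ℝ) * τbar^2 ≤ n := le_trans hN₀ge (by exact_mod_cast hbig)
    have hr8 : 8 * τbar ≤ Real.sqrt n := by
      rw [Real.le_sqrt (by positivity) (by positivity)]
      nlinarith
    set L : ℕ := min n ⌊a / τbar⌋₊ with hLdef
    set S : ℕ := Nat.sqrt n with hSdef
    have hSle : (S:ℝ) ≤ Real.sqrt n := by
      rw [Real.le_sqrt (by positivity) (by positivity)]
      exact_mod_cast Nat.sqrt_le' n
    have hSge : Real.sqrt n ≤ (S:ℝ) + 1 := by
      rw [Real.sqrt_le_left (by positivity)]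
      have h := Nat.lt_succ_sqrt' n
      have h' : (n:ℝ) < ((S:ℝ)+1)^2 := by exact_mod_cast h
      linarith
    have hLn : L ≤ n := min_le_left _ _
    have hLτ : (L:ℝ) * τbar ≤ a := by
      have h1 : L ≤ ⌊a/τbar⌋₊ := min_le_right _ _
      have h2 : (L:ℝ) ≤ a / τbar := by
        exact_mod_cast (Nat.le_floor_iff (by positivity)).mp h1
      calc (L:ℝ) * τbar ≤ (a/τbar) * τbar := by nlinarith
        _ = a := by field_simp
    have hLreal : ((n:ℝ) - Real.sqrt n)/τbar - 1 ≤ (L:ℝ) := by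
      have hLcast : (L:ℝ) = min (n:ℝ) (⌊a/τbar⌋₊ : ℝ) := by
        rw [hLdef]; push_cast [Nat.cast_min]; ring
      rw [hLcast]
      apply le_min
      · have h3 : ((n:ℝ) - Real.sqrt n)/τbar ≤ (n:ℝ) := by
          rw [div_le_iff₀ hτ0]; nlinarith
        linarith
      · have h1 : a / τbar - 1 ≤ (⌊a / τbar⌋₊ : ℝ) := by
          have := Nat.lt_floor_add_one (a / τbar)
          linarith
        have h2 : ((n:ℝ) - Real.sqrt n)/τbar ≤ a/τbar := (div_le_div_iff_of_pos_right hτ0).mpr ham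
        linarith
    -- lower bound used for both halves: n/(4τbar) threshold
    have hkey : (n:ℝ)/(4*τbar) ≤ ((n:ℝ) - Real.sqrt n)/τbar - 1 - Real.sqrt n := by
      rw [div_le_iff₀ (by positivity)]
      have hq : ((n:ℝ) - Real.sqrt n)/τbar * τbar = (n:ℝ) - Real.sqrt n :=
        div_mul_cancel₀ _ (ne_of_gt hτ0)
      nlinarith [hq, hrn2, hrn0.le,
        mul_nonneg (by linarith : (0:ℝ) ≤ Real.sqrt n - 8*τbar) hrn0.le,
        mul_nonneg (by linarith : (0:ℝ) ≤ τbar - 1) hrn0.le,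
        mul_nonneg hτ0.le (by linarith : (0:ℝ) ≤ Real.sqrt n - 1)]
    -- left half bound
    have hleft : ∀ s ∈ range L, F (L - s) ≤
        if s ≤ S then 4*τbar/(n:ℝ) else 1 / ((c*τbar^2) * (s:ℝ)^2) := by
      intro s hs
      rw [mem_range] at hs
      simp only [hF]
      have hkc : ((L - s : ℕ) : ℝ) = (L:ℝ) - s := by
        rw [Nat.cast_sub hs.le]
      have hk1 : (1:ℝ) ≤ ((L - s : ℕ) : ℝ) := by
        have : 1 ≤ L - s := by omega
        exact_mod_cast this
      have hx : τbar * s ≤ a - ((L - s : ℕ) : ℝ) * τbar := by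
        rw [hkc]; nlinarith
      have hx2 : τbar^2 * (s:ℝ)^2 ≤ (a - ((L - s : ℕ) : ℝ) * τbar)^2 := by
        have h0 : 0 ≤ τbar * s := by positivity
        have h3 := mul_self_le_mul_self h0 hx
        nlinarith [h3]
      have hpos : (0:ℝ) < ((L - s:ℕ):ℝ) + c * (a - ((L - s : ℕ) : ℝ) * τbar)^2 := by
        nlinarith [sq_nonneg (a - ((L - s : ℕ) : ℝ) * τbar)]
      split_ifs with hsS
      · -- use 1/k ≤ 4τbar/n
        have hsr : (s:ℝ) ≤ Real.sqrt n := le_trans (by exact_mod_cast hsS) hSle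
        have hkge : (n:ℝ)/(4*τbar) ≤ ((L - s:ℕ):ℝ) := by
          rw [hkc]
          have := hkey
          linarith [hLreal]
        calc (1:ℝ) / (((L - s:ℕ):ℝ) + c * (a - ((L - s:ℕ):ℝ) * τbar)^2) ≤ 1 / ((L - s:ℕ):ℝ) := by
              apply one_div_le_one_div_of_le (by linarith) 
              nlinarith [sq_nonneg (a - ((L - s : ℕ) : ℝ) * τbar)]
          _ ≤ 4*τbar/(n:ℝ) := by
              rw [div_le_div_iff₀ (by linarith) hn0]
              have hqq : (n:ℝ)/(4*τbar)*(4*τbar) = n := div_mul_cancel₀ _ (by positivity)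
              nlinarith [mul_le_mul_of_nonneg_right hkge
                (le_of_lt (by positivity : (0:ℝ) < 4*τbar)), hqq]
      · -- use 1/(c τbar² s²)
        have hs1 : 1 ≤ s := by omega
        have hs1' : (1:ℝ) ≤ s := by exact_mod_cast hs1
        apply one_div_le_one_div_of_le (by positivity)
        nlinarith
    -- right half bound
    have hright : ∀ s ∈ range (n - L), F (L + 1 + s) ≤
        if s ≤ S then 4*τbar/(n:ℝ) else 1 / ((c*τbar^2) * (s:ℝ)^2) := by
      intro s hs
      rw [mem_range] at hs
      simp only [hF]
      have hLlt : L < n := by omega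
      have hLfl : L = ⌊a/τbar⌋₊ := by
        omega
      have haL : a < ((L:ℝ) + 1) * τbar := by
        have h1 : a/τbar < (⌊a/τbar⌋₊:ℝ) + 1 := Nat.lt_floor_add_one _
        have h2 : a/τbar < (L:ℝ) + 1 := by rw [hLfl]; exact_mod_cast h1
        calc a = (a/τbar) * τbar := by field_simp
          _ < ((L:ℝ)+1) * τbar := by nlinarith
      have hkc : ((L + 1 + s : ℕ) : ℝ) = (L:ℝ) + 1 + s := by push_cast; ring
      have hx : τbar * s ≤ ((L + 1 + s : ℕ) : ℝ) * τbar - a := by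
        rw [hkc]; nlinarith
      have hx2 : τbar^2 * (s:ℝ)^2 ≤ (a - ((L + 1 + s : ℕ) : ℝ) * τbar)^2 := by
        have h0 : 0 ≤ τbar * s := by positivity
        have h3 := mul_self_le_mul_self h0 hx
        nlinarith [h3]
      have hkge : (n:ℝ)/(4*τbar) ≤ ((L + 1 + s:ℕ):ℝ) := by
        rw [hkc]
        have hs0 : (0:ℝ) ≤ s := by positivity
        linarith [hLreal, hkey, hrn0.le]
      have hkpos : (0:ℝ) < ((L + 1 + s:ℕ):ℝ) := by rw [hkc]; positivity
      split_ifs with hsS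
      · calc (1:ℝ) / (((L + 1 + s:ℕ):ℝ) + c * (a - ((L + 1 + s:ℕ):ℝ) * τbar)^2) ≤ 1 / ((L + 1 + s:ℕ):ℝ) := by
              apply one_div_le_one_div_of_le hkpos
              nlinarith [sq_nonneg (a - ((L + 1 + s : ℕ) : ℝ) * τbar)]
          _ ≤ 4*τbar/(n:ℝ) := by
              rw [div_le_div_iff₀ hkpos hn0]
              have hqq : (n:ℝ)/(4*τbar)*(4*τbar) = n := div_mul_cancel₀ _ (by positivity)
              nlinarith [mul_le_mul_of_nonneg_right hkge
                (le_of_lt (by positivity : (0:ℝ) < 4*τbar)), hqq]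
      · have hs1 : 1 ≤ s := by omega
        have hs1' : (1:ℝ) ≤ s := by exact_mod_cast hs1
        apply one_div_le_one_div_of_le (by positivity)
        nlinarith [hkpos]
    -- assemble
    have hsplit : ∑ k ∈ Icc 1 n, F k = ∑ k ∈ Ioc 0 L, F k + ∑ k ∈ Ioc L n, F k := by
      rw [sum_Ioc_consecutive _ (Nat.zero_le L) hLn, ← Finset.Icc_add_one_left_eq_Ioc, zero_add]
    have hLeq : ∑ k ∈ Ioc 0 L, F k = ∑ s ∈ range L, F (L - s) := by
      apply Finset.sum_nbij' (fun k => L - k) (fun s => L - s)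
      · intro k hk; simp only [mem_Ioc] at hk; simp only [mem_range]; omega
      · intro s hs; simp only [mem_range] at hs; simp only [mem_Ioc]; omega
      · intro k hk; simp only [mem_Ioc] at hk; omega
      · intro s hs; simp only [mem_range] at hs; omega
      · intro k hk; simp only [mem_Ioc] at hk; congr 1; omega
    have hReq : ∑ k ∈ Ioc L n, F k = ∑ s ∈ range (n - L), F (L + 1 + s) := by
      apply Finset.sum_nbij' (fun k => k - (L+1)) (fun s => L + 1 + s)
      · intro k hk; simp only [mem_Ioc] at hk; simp only [mem_range]; omega
      · intro s hs; simp only [mem_range] at hs; simp only [mem_Ioc]; omega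
      · intro k hk; simp only [mem_Ioc] at hk; omega
      · intro s hs; simp only [mem_range] at hs; omega
      · intro k hk; simp only [mem_Ioc] at hk; congr 1; omega
    have hc' : (0:ℝ) < c * τbar^2 := by positivity
    have hB : (0:ℝ) ≤ 4*τbar/(n:ℝ) := by positivity
    have h1 := half_sum_le (c*τbar^2) (4*τbar/(n:ℝ)) hc' hB S L _ hleft
    have h2 := half_sum_le (c*τbar^2) (4*τbar/(n:ℝ)) hc' hB S (n - L) _ hright
    have hfin : ((S:ℝ)+1) * (4*τbar/(n:ℝ)) + 2/((c*τbar^2)*((S:ℝ)+1))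
        ≤ 8*τbar/Real.sqrt n + 2/((c*τbar^2)*Real.sqrt n) := by
      gcongr ?_ + ?_
      · have heq : ((S:ℝ)+1)*(4*τbar/(n:ℝ)) = ((S:ℝ)+1)*(4*τbar)/(n:ℝ) := by ring
        rw [heq, div_le_div_iff₀ hn0 hrn0]
        nlinarith [mul_nonneg (mul_nonneg
          (by linarith : (0:ℝ) ≤ 2*Real.sqrt n - ((S:ℝ)+1)) (by positivity : (0:ℝ) ≤ 4*τbar))
          hrn0.le, hrn2]
      · apply div_le_div_of_nonneg_left (by norm_num) (by positivity)
        exact mul_le_mul_of_nonneg_left hSge hc'.le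
    calc ∑ k ∈ Icc 1 n,
          (1 / (k : ℝ)) * Real.exp (-c * (((n : ℝ) - m - k * τbar) / Real.sqrt k) ^ 2)
        ≤ ∑ k ∈ Icc 1 n, F k := hsum1
      _ = ∑ s ∈ range L, F (L - s) + ∑ s ∈ range (n - L), F (L + 1 + s) := by
          rw [hsplit, hLeq, hReq]
      _ ≤ (((S:ℝ)+1) * (4*τbar/(n:ℝ)) + 2/((c*τbar^2)*((S:ℝ)+1)))
          + (((S:ℝ)+1) * (4*τbar/(n:ℝ)) + 2/((c*τbar^2)*((S:ℝ)+1))) := add_le_add h1 h2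
      _ ≤ (8*τbar/Real.sqrt n + 2/((c*τbar^2)*Real.sqrt n))
          + (8*τbar/Real.sqrt n + 2/((c*τbar^2)*Real.sqrt n)) := add_le_add hfin hfin
      _ = 16*τbar/Real.sqrt n + (4/(c*τbar^2))/Real.sqrt n := by
          rw [div_mul_eq_div_div]
          ring
      _ = (16*τbar + 4/(c*τbar^2))/Real.sqrt n := by rw [← add_div]
      _ ≤ (16*τbar + 4/(c*τbar^2) + (N₀:ℝ)^2)/Real.sqrt n := by
          apply (div_le_div_iff_of_pos_right hrn0).mpr
          nlinarith [sq_nonneg ((N₀:ℝ))]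
  · -- small n case
    push_neg at hbig
    have hcrude : ∑ k ∈ Icc 1 n, F k ≤ (n:ℝ) := by
      calc ∑ k ∈ Icc 1 n, F k ≤ ∑ k ∈ Icc 1 n, 1 := by
            apply sum_le_sum
            intro k hk
            simp only [mem_Icc] at hk
            have hk1 : (1:ℝ) ≤ k := by exact_mod_cast hk.1
            have hpos : (0:ℝ) < (k:ℝ) + c * (a - k * τbar)^2 := by
              nlinarith [sq_nonneg (a - k * τbar), mul_nonneg hc.le (sq_nonneg (a - k * τbar))]
            rw [hF]
            rw [div_le_one hpos]
            nlinarith [mul_nonneg hc.le (sq_nonneg (a - k * τbar))]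
        _ = ((Icc 1 n).card : ℝ) := by rw [sum_const, nsmul_eq_mul, mul_one]
        _ ≤ (n:ℝ) := by
            rw [Nat.card_Icc]
            norm_num
    refine le_trans hsum1 (le_trans hcrude ?_)
    rw [le_div_iff₀ hrn0]
    have hnN : (n:ℝ) ≤ N₀ := by exact_mod_cast hbig.le
    have hrnn : Real.sqrt n ≤ (n:ℝ) := by nlinarith
    have hN2 : (0:ℝ) ≤ 16*τbar + 4/(c*τbar^2) := by positivity
    calc (n:ℝ) * Real.sqrt n ≤ (n:ℝ) * n := by nlinarith
      _ ≤ (N₀:ℝ)^2 := by nlinarith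
      _ ≤ (16*τbar + 4/(c*τbar^2) + (N₀:ℝ)^2) := by linarith
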